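/- Under stationarity, for each ε > 0 one has the decomposition S_n(g) = M_n(ε) + ε S_n(h_ε) + R_n(ε), where M_n(ε) = Σ_{i=1}^n H_ε(X_{i-1}, X_i) and R_n(ε) = Q h_ε(X₀) − Q h_ε(X_n), and M_n(ε) is a square-integrable martingale with respect to the natural filtration of the chain. -/

import Mathlib

open MeasureTheory Filter

/-- For each `ε > 0`, `S_n(g) = M_n(ε) + ε S_n(h_ε) + R_n(ε)` with
`M_n(ε) = ∑_{i=1}^n H_ε(X_{i-1}, X_i)` a square-integrable martingale and
`R_n(ε) = Qh_ε(X₀) - Qh_ε(X_n)`. -/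
theorem stmt6 {X Ω : Type*} [MeasurableSpace X] {m0 : MeasurableSpace Ω}
    (μ : Measure Ω) [IsProbabilityMeasure μ]
    (Xc : ℕ → Ω → X) (hXm : ∀ n, Measurable (Xc n))
    (ℱ : Filtration ℕ m0)
    (hadapt : ∀ n, @Measurable Ω X (ℱ n) _ (Xc n))
    (g hε qhε : X → ℝ) (hgm : Measurable g) (hhm : Measurable hε) (hqm : Measurable qhε)
    (ε : ℝ) (hεpos : 0 < ε)
    (hres : ∀ x, (1 + ε) * hε x = qhε x + g x)
    (hL2 : ∀ n, MemLp (fun ω => hε (Xc n ω)) 2 μ)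
    (hqL2 : ∀ n, MemLp (fun ω => qhε (Xc n ω)) 2 μ)
    (hmarkov : ∀ n : ℕ,
      μ[(fun ω => hε (Xc (n + 1) ω)) | ℱ n] =ᵐ[μ] fun ω => qhε (Xc n ω)) :
    (∀ n ω, ∑ i ∈ Finset.range n, g (Xc (i + 1) ω)
        = (∑ i ∈ Finset.range n, (hε (Xc (i + 1) ω) - qhε (Xc i ω)))
          + ε * (∑ i ∈ Finset.range n, hε (Xc (i + 1) ω))
          + (qhε (Xc 0 ω) - qhε (Xc n ω)))
    ∧ Martingale (fun n ω => ∑ i ∈ Finset.range n, (hε (Xc (i + 1) ω) - qhε (Xc i ω))) ℱ μ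
    ∧ ∀ n, MemLp (fun ω => ∑ i ∈ Finset.range n, (hε (Xc (i + 1) ω) - qhε (Xc i ω))) 2 μ := by
  have hterm : ∀ i, MemLp (fun ω => hε (Xc (i + 1) ω) - qhε (Xc i ω)) 2 μ :=
    fun i => (hL2 (i + 1)).sub (hqL2 i)
  have hML2 : ∀ n, MemLp (fun ω => ∑ i ∈ Finset.range n,
      (hε (Xc (i + 1) ω) - qhε (Xc i ω))) 2 μ := by
    intro n
    have := memLp_finset_sum (Finset.range n)
      (f := fun i ω => hε (Xc (i + 1) ω) - qhε (Xc i ω)) (fun i _ => hterm i)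
    simpa using this
  have hint : ∀ n, Integrable (fun ω => ∑ i ∈ Finset.range n,
      (hε (Xc (i + 1) ω) - qhε (Xc i ω))) μ :=
    fun n => (hML2 n).integrable one_le_two
  have hsm : ∀ i n, i + 1 ≤ n → StronglyMeasurable[ℱ n]
      (fun ω => hε (Xc (i + 1) ω) - qhε (Xc i ω)) := by
    intro i n hin
    exact ((hhm.comp ((hadapt (i + 1)).mono (ℱ.mono hin) le_rfl)).sub
      (hqm.comp ((hadapt i).mono (ℱ.mono (Nat.le_of_succ_le hin)) le_rfl))).stronglyMeasurable
  have hadp : StronglyAdapted ℱ (fun n ω => ∑ i ∈ Finset.range n,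
      (hε (Xc (i + 1) ω) - qhε (Xc i ω))) := by
    intro n
    apply Finset.stronglyMeasurable_fun_sum
    intro i hi
    exact hsm i n (Finset.mem_range.mp hi)
  refine ⟨?_, ?_, hML2⟩
  · intro n ω
    induction n with
    | zero => simp
    | succ n ih =>
      rw [Finset.sum_range_succ, Finset.sum_range_succ, Finset.sum_range_succ, ih, mul_add]
      linarith [hres (Xc (n + 1) ω)]
  · refine martingale_nat hadp hint fun n => ?_
    have hqsm : StronglyMeasurable[ℱ n] (fun ω => qhε (Xc n ω)) :=
      Measurable.stronglyMeasurable (fun s hs => (hadapt n) (hqm hs))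
    have h1 : μ[(fun ω => ∑ i ∈ Finset.range n, (hε (Xc (i + 1) ω) - qhε (Xc i ω))) | ℱ n]
        =ᵐ[μ] fun ω => ∑ i ∈ Finset.range n, (hε (Xc (i + 1) ω) - qhε (Xc i ω)) := by
      rw [condExp_of_stronglyMeasurable (ℱ.le n) (hadp n) (hint n)]
    have h2 : μ[(fun ω => qhε (Xc n ω)) | ℱ n] =ᵐ[μ] fun ω => qhε (Xc n ω) := by
      rw [condExp_of_stronglyMeasurable (ℱ.le n) hqsm ((hqL2 n).integrable one_le_two)]
    have hdec : (fun ω => ∑ i ∈ Finset.range (n + 1), (hε (Xc (i + 1) ω) - qhε (Xc i ω)))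
        = (fun ω => ∑ i ∈ Finset.range n, (hε (Xc (i + 1) ω) - qhε (Xc i ω)))
          + ((fun ω => hε (Xc (n + 1) ω)) - fun ω => qhε (Xc n ω)) := by
      funext ω
      simp only [Pi.add_apply, Pi.sub_apply, Finset.sum_range_succ]
    have hih : Integrable (fun ω => hε (Xc (n + 1) ω)) μ := (hL2 (n + 1)).integrable one_le_two
    have hiq : Integrable (fun ω => qhε (Xc n ω)) μ := (hqL2 n).integrable one_le_two
    have hA : μ[((fun ω => ∑ i ∈ Finset.range n, (hε (Xc (i + 1) ω) - qhε (Xc i ω)))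
          + ((fun ω => hε (Xc (n + 1) ω)) - fun ω => qhε (Xc n ω))) | ℱ n]
        =ᵐ[μ] μ[(fun ω => ∑ i ∈ Finset.range n, (hε (Xc (i + 1) ω) - qhε (Xc i ω))) | ℱ n]
          + μ[((fun ω => hε (Xc (n + 1) ω)) - fun ω => qhε (Xc n ω)) | ℱ n] :=
      condExp_add (hint n) (hih.sub hiq) _
    have hB : μ[((fun ω => hε (Xc (n + 1) ω)) - fun ω => qhε (Xc n ω)) | ℱ n]
        =ᵐ[μ] μ[(fun ω => hε (Xc (n + 1) ω)) | ℱ n] - μ[(fun ω => qhε (Xc n ω)) | ℱ n] :=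
      condExp_sub hih hiq _
    rw [hdec]
    filter_upwards [hA, hB, h1, h2, hmarkov n] with ω eA eB e1 e2 e3
    rw [eA]
    simp only [Pi.add_apply, Pi.sub_apply] at eB ⊢
    rw [eB, e1, e2, e3]
    ring
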